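/- If {(c_σ, w_σ)}_{σ ∈ S_{n−1}, w_σ ≠ 0} is a signed fundamental domain for the action of Ṽ on ℝ^{n−1}_+, then {(C_σ, w_σ)}_{σ ∈ S_{n−1}, w_σ ≠ 0} is a signed fundamental domain for the action of V on ℝ^n_+. -/

import Mathlib

open scoped Classical NumberField
open NumberField

noncomputable section

namespace SignedDomain

variable {K : Type*} [Field K] [NumberField K] {n : ℕ}

/-- Embedding of `K` into `ℝ^(n+1)` via the real embeddings `τ`. -/
def emb (τ : Fin (n + 1) → (K →+* ℝ)) (x : K) : Fin (n + 1) → ℝ :=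
  fun i => τ i x

/-- The group `E₊` of totally positive units of the ring of integers. -/
def Eplus (τ : Fin (n + 1) → (K →+* ℝ)) : Subgroup (𝓞 K)ˣ where
  carrier := {u | ∀ i, 0 < τ i ((u : 𝓞 K) : K)}
  one_mem' := by intro i; simp
  mul_mem' := by
    intro a b ha hb i
    have h : ((↑(a * b) : 𝓞 K) : K) = ((↑a : 𝓞 K) : K) * ((↑b : 𝓞 K) : K) := by
      push_cast; ring
    simp only [Set.mem_setOf_eq] at *
    rw [h, map_mul]
    exact mul_pos (ha i) (hb i)
  inv_mem' := by
    intro a ha i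
    simp only [Set.mem_setOf_eq] at *
    have h : τ i ((↑(a⁻¹) : 𝓞 K) : K) * τ i ((↑a : 𝓞 K) : K) = 1 := by
      rw [← map_mul]
      have : ((↑(a⁻¹) : 𝓞 K) : K) * ((↑a : 𝓞 K) : K) = 1 := by
        have := a.inv_mul
        calc ((↑(a⁻¹) : 𝓞 K) : K) * ((↑a : 𝓞 K) : K) = ((↑(a⁻¹ * a) : 𝓞 K) : K) := by push_cast; ring
        _ = 1 := by rw [inv_mul_cancel]; simp
      rw [this, map_one]
    nlinarith [ha i]

/-- The subgroup generated by the chosen units. -/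
def V (ε : Fin n → (𝓞 K)ˣ) : Subgroup (𝓞 K)ˣ :=
  Subgroup.closure (Set.range ε)

/-- The vectors `f_{i,σ} = ∏_{j<i} ε_{σ(j)}`, viewed in `ℝ^(n+1)`. -/
def fvec (τ : Fin (n + 1) → (K →+* ℝ)) (ε : Fin n → (𝓞 K)ˣ) (σ : Equiv.Perm (Fin n))
    (i : Fin (n + 1)) : Fin (n + 1) → ℝ :=
  fun l => ∏ j ∈ Finset.univ.filter (fun j : Fin n => (j : ℕ) < (i : ℕ)), τ l ((ε (σ j) : 𝓞 K) : K)

/-- The matrix with columns `Log ε_i` (first `n` coordinates of the logarithmic embedding). -/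
def LogMat (τ : Fin (n + 1) → (K →+* ℝ)) (ε : Fin n → (𝓞 K)ˣ) : Matrix (Fin n) (Fin n) ℝ :=
  Matrix.of fun l i => Real.log (τ (Fin.castSucc l) ((ε i : 𝓞 K) : K))

/-- The matrix with columns `f_{1,σ},…,f_{n+1,σ}`. -/
def Fmat (τ : Fin (n + 1) → (K →+* ℝ)) (ε : Fin n → (𝓞 K)ˣ) (σ : Equiv.Perm (Fin n)) :
    Matrix (Fin (n + 1)) (Fin (n + 1)) ℝ :=
  Matrix.of fun l i => fvec τ ε σ i l

/-- The weight `w_σ`. -/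
def w (τ : Fin (n + 1) → (K →+* ℝ)) (ε : Fin n → (𝓞 K)ˣ) (σ : Equiv.Perm (Fin n)) : ℝ :=
  ((-1 : ℝ) ^ n * ((Equiv.Perm.sign σ : ℤ) : ℝ) * Real.sign (Fmat τ ε σ).det) /
    Real.sign (LogMat τ ε).det

/-- The last standard basis vector `e_n` of `ℝ^(n+1)`. -/
def en : Fin (n + 1) → ℝ := fun i => if i = Fin.last n then 1 else 0

/-- `e_n` lies in the open half-space `H_{i,σ}^+` (on the same side as `f_{i,σ}`):
when the `f_{j,σ}` form a basis this says that the `i`-th coordinate of `e_n`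
with respect to this basis is positive. -/
def posSide (τ : Fin (n + 1) → (K →+* ℝ)) (ε : Fin n → (𝓞 K)ˣ) (σ : Equiv.Perm (Fin n))
    (i : Fin (n + 1)) : Prop :=
  ∃ c : Fin (n + 1) → ℝ, (en = ∑ j, c j • fvec τ ε σ j) ∧ 0 < c i

/-- The coefficient range `R_{i,σ}`. -/
def Rset (τ : Fin (n + 1) → (K →+* ℝ)) (ε : Fin n → (𝓞 K)ˣ) (σ : Equiv.Perm (Fin n))
    (i : Fin (n + 1)) : Set ℝ :=
  if posSide τ ε σ i then Set.Ici 0 else Set.Ioi 0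

/-- The (partly open) cone `C_σ`; empty when `w_σ = 0`. -/
def Cone (τ : Fin (n + 1) → (K →+* ℝ)) (ε : Fin n → (𝓞 K)ˣ) (σ : Equiv.Perm (Fin n)) :
    Set (Fin (n + 1) → ℝ) :=
  if w τ ε σ ≠ 0 then
    {x | ∃ c : Fin (n + 1) → ℝ, (∀ i, c i ∈ Rset τ ε σ i) ∧ x = ∑ j, c j • fvec τ ε σ j}
  else ∅

/-- The orbit `V·x` of `x ∈ ℝ^(n+1)` under the componentwise action of `V`. -/
def orbit (τ : Fin (n + 1) → (K →+* ℝ)) (ε : Fin n → (𝓞 K)ˣ) (x : Fin (n + 1) → ℝ) :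
    Set (Fin (n + 1) → ℝ) :=
  {y | ∃ u ∈ V ε, y = emb τ ((u : 𝓞 K) : K) * x}

/-- The positive orthant of `ℝ^m`. -/
def posOrthant (m : ℕ) : Set (Fin m → ℝ) := {x | ∀ i, 0 < x i}

/-- The projection `ℓ(x) = (x₁/xₙ, …, x_{n-1}/xₙ)`. -/
def ell (x : Fin (n + 1) → ℝ) : Fin n → ℝ :=
  fun j => x (Fin.castSucc j) / x (Fin.last n)

/-- The vertices `φ_{i,σ} = ℓ(f_{i+1,σ})`. -/
def phi (τ : Fin (n + 1) → (K →+* ℝ)) (ε : Fin n → (𝓞 K)ˣ) (σ : Equiv.Perm (Fin n))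
    (i : Fin (n + 1)) : Fin n → ℝ :=
  ell (fvec τ ε σ i)

/-- The coefficient range `J_{i,σ}`. -/
def Jset (τ : Fin (n + 1) → (K →+* ℝ)) (ε : Fin n → (𝓞 K)ˣ) (σ : Equiv.Perm (Fin n))
    (i : Fin (n + 1)) : Set ℝ :=
  if posSide τ ε σ i then Set.Icc 0 1 else Set.Ioc 0 1

/-- The (partly open) simplex `c_σ`; empty when `w_σ = 0`. -/
def simplex (τ : Fin (n + 1) → (K →+* ℝ)) (ε : Fin n → (𝓞 K)ˣ) (σ : Equiv.Perm (Fin n)) :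
    Set (Fin n → ℝ) :=
  if w τ ε σ ≠ 0 then
    {y | ∃ b : Fin (n + 1) → ℝ, (∑ i, b i = 1) ∧ (∀ i, b i ∈ Jset τ ε σ i) ∧
      y = ∑ i, b i • phi τ ε σ i}
  else ∅

/-- The orbit `Ṽ·y` of `y ∈ ℝ^n` under the componentwise action of `Ṽ = ℓ(V)`. -/
def torbit (τ : Fin (n + 1) → (K →+* ℝ)) (ε : Fin n → (𝓞 K)ˣ) (y : Fin n → ℝ) :
    Set (Fin n → ℝ) :=
  {z | ∃ u ∈ V ε, z = ell (emb τ ((u : 𝓞 K) : K)) * y}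



-- ## Auxiliary lemmas

omit [NumberField K] in
lemma mem_V_pos (τ : Fin (n + 1) → (K →+* ℝ)) (ε : Fin n → (𝓞 K)ˣ)
    (hpos : ∀ i, ε i ∈ Eplus τ) {u : (𝓞 K)ˣ} (hu : u ∈ V ε) (i : Fin (n + 1)) :
    0 < τ i ((u : 𝓞 K) : K) := by
  have hle : V ε ≤ Eplus τ := (Subgroup.closure_le _).2 (by rintro _ ⟨j, rfl⟩; exact hpos j)
  exact hle hu i

omit [NumberField K] in
lemma fvec_pos (τ : Fin (n + 1) → (K →+* ℝ)) (ε : Fin n → (𝓞 K)ˣ)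
    (hpos : ∀ i, ε i ∈ Eplus τ) (σ : Equiv.Perm (Fin n)) (i : Fin (n + 1)) (l : Fin (n + 1)) :
    0 < fvec τ ε σ i l :=
  Finset.prod_pos fun j _ => hpos (σ j) l

lemma abs_prod_tau (τ : Fin (n + 1) → (K →+* ℝ)) (hτ : Function.Injective τ)
    (hdeg : Module.finrank ℚ K = n + 1) (u : (𝓞 K)ˣ) :
    |∏ i, τ i ((u : 𝓞 K) : K)| = 1 := by
  set g : Fin (n + 1) → (K →+* ℂ) := fun i => Complex.ofRealHom.comp (τ i) with hg
  have hginj : Function.Injective g := by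
    intro a b hab
    apply hτ
    ext x
    have := DFunLike.congr_fun hab x
    simpa [hg, Complex.ofReal_inj] using this
  have hcard : Fintype.card (K →+* ℂ) = n + 1 := by
    rw [NumberField.Embeddings.card K ℂ, hdeg]
  have hgbij : Function.Bijective g :=
    (Fintype.bijective_iff_injective_and_card g).2 ⟨hginj, by simp [hcard]⟩
  have hprod : ∏ φ : (K →+* ℂ), φ ((u : 𝓞 K) : K) =
      ((∏ i, τ i ((u : 𝓞 K) : K) : ℝ) : ℂ) := by
    rw [← Fintype.prod_bijective g hgbij _ _ (fun i => rfl)]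
    push_cast
    rfl
  have hnorm : (algebraMap ℚ ℂ) ((Algebra.norm ℚ) ((u : 𝓞 K) : K)) =
      ∏ φ : K →ₐ[ℚ] ℂ, φ ((u : 𝓞 K) : K) := Algebra.norm_eq_prod_embeddings ℚ ℂ _
  have hconv : ∏ φ : K →ₐ[ℚ] ℂ, φ ((u : 𝓞 K) : K) = ∏ φ : (K →+* ℂ), φ ((u : 𝓞 K) : K) :=
    (Fintype.prod_equiv (RingHom.equivRatAlgHom K ℂ) (fun f => f ((u : 𝓞 K) : K))
      (fun φ => φ ((u : 𝓞 K) : K)) (fun _ => rfl)).symm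
  have habs : |Algebra.norm ℚ ((u : 𝓞 K) : K)| = 1 := by
    have := NumberField.isUnit_iff_norm.mp u.isUnit
    rwa [RingOfIntegers.coe_norm] at this
  have hC : ((∏ i, τ i ((u : 𝓞 K) : K) : ℝ) : ℂ) = ((Algebra.norm ℚ ((u : 𝓞 K) : K) : ℚ) : ℂ) := by
    rw [← hprod, ← hconv, ← hnorm]; rfl
  have hreal : (∏ i, τ i ((u : 𝓞 K) : K) : ℝ) = ((Algebra.norm ℚ ((u : 𝓞 K) : K) : ℚ) : ℝ) := by
    exact_mod_cast hC
  rw [hreal, ← Rat.cast_abs, habs]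
  norm_num

lemma unit_eq_of_ell_emb_eq (τ : Fin (n + 1) → (K →+* ℝ)) (ε : Fin n → (𝓞 K)ˣ)
    (hτ : Function.Injective τ) (hdeg : Module.finrank ℚ K = n + 1)
    (hpos : ∀ i, ε i ∈ Eplus τ) {u v : (𝓞 K)ˣ} (hu : u ∈ V ε) (hv : v ∈ V ε)
    (h : ell (emb τ ((u : 𝓞 K) : K)) = ell (emb τ ((v : 𝓞 K) : K))) : u = v := by
  set a : Fin (n + 1) → ℝ := fun i => τ i ((u : 𝓞 K) : K) with ha
  set b : Fin (n + 1) → ℝ := fun i => τ i ((v : 𝓞 K) : K) with hb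
  have hapos : ∀ i, 0 < a i := mem_V_pos τ ε hpos hu
  have hbpos : ∀ i, 0 < b i := mem_V_pos τ ε hpos hv
  set c : ℝ := a (Fin.last n) / b (Fin.last n) with hc
  have hcpos : 0 < c := div_pos (hapos _) (hbpos _)
  have hkey : ∀ i, a i = c * b i := by
    intro i
    induction i using Fin.lastCases with
    | last =>
      rw [hc]
      rw [div_mul_eq_mul_div, mul_div_assoc, div_self (hbpos (Fin.last n)).ne', mul_one]
    | cast j =>
      have hj := congr_fun h j
      simp only [ell, emb] at hj
      rw [hc]
      have h1 : a (Fin.last n) ≠ 0 := (hapos _).ne'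
      have h2 : b (Fin.last n) ≠ 0 := (hbpos _).ne'
      have hj' : a (Fin.castSucc j) / a (Fin.last n) = b (Fin.castSucc j) / b (Fin.last n) := hj
      field_simp at hj' ⊢
      linarith [hj']
  have hprodeq : ∏ i, a i = c ^ (n + 1) * ∏ i, b i := by
    calc ∏ i, a i = ∏ i, (c * b i) := Finset.prod_congr rfl fun i _ => hkey i
    _ = c ^ (n + 1) * ∏ i, b i := by
        rw [Finset.prod_mul_distrib, Finset.prod_const, Finset.card_univ, Fintype.card_fin]
  have hau : |∏ i, a i| = 1 := abs_prod_tau τ hτ hdeg u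
  have hbu : |∏ i, b i| = 1 := abs_prod_tau τ hτ hdeg v
  have hcpow : c ^ (n + 1) = 1 := by
    have h3 : |∏ i, a i| = |c ^ (n + 1)| * |∏ i, b i| := by rw [hprodeq, abs_mul]
    rw [hau, hbu, mul_one, abs_pow, abs_of_pos hcpos] at h3
    exact h3.symm
  have hc1 : c = 1 := by
    rcases lt_trichotomy c 1 with hlt | heq | hgt
    · exfalso
      have := pow_lt_one₀ (le_of_lt hcpos) hlt (Nat.succ_ne_zero n)
      rw [hcpow] at this; exact lt_irrefl 1 this
    · exact heq
    · exfalso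
      have := one_lt_pow₀ hgt (Nat.succ_ne_zero n)
      rw [hcpow] at this; exact lt_irrefl 1 this
  have h0 : a 0 = b 0 := by rw [hkey 0, hc1, one_mul]
  have hK : ((u : 𝓞 K) : K) = ((v : 𝓞 K) : K) := (τ 0).injective h0
  exact Units.ext (NumberField.RingOfIntegers.ext hK)

omit [NumberField K] in
lemma ell_mul (a x : Fin (n + 1) → ℝ) : ell (a * x) = ell a * ell x := by
  funext j
  simp only [ell, Pi.mul_apply]
  exact mul_div_mul_comm _ _ _ _

lemma bijOn_ell (τ : Fin (n + 1) → (K →+* ℝ)) (ε : Fin n → (𝓞 K)ˣ)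
    (hτ : Function.Injective τ) (hdeg : Module.finrank ℚ K = n + 1)
    (hpos : ∀ i, ε i ∈ Eplus τ) (σ : Equiv.Perm (Fin n)) {x : Fin (n + 1) → ℝ}
    (hx : x ∈ posOrthant (n + 1)) :
    Set.BijOn ell (Cone τ ε σ ∩ orbit τ ε x) (simplex τ ε σ ∩ torbit τ ε (ell x)) := by
  by_cases hw : w τ ε σ = 0
  · rw [Cone, simplex, if_neg (not_not_intro hw), if_neg (not_not_intro hw),
      Set.empty_inter, Set.empty_inter]
    exact Set.bijOn_empty _
  refine ⟨?_, ?_, ?_⟩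
  · -- MapsTo
    rintro p ⟨hpC, u, hu, hpu⟩
    rw [Cone, if_pos hw] at hpC
    obtain ⟨c, hc, hpsum⟩ := hpC
    have hppos : ∀ l, 0 < p l := by
      intro l; rw [hpu]; exact mul_pos (mem_V_pos τ ε hpos hu l) (hx l)
    have htpos : 0 < p (Fin.last n) := hppos _
    have hplast : ∑ j, c j * fvec τ ε σ j (Fin.last n) = p (Fin.last n) := by
      conv_rhs => rw [hpsum]
      simp [Finset.sum_apply]
    set b : Fin (n + 1) → ℝ :=
      fun i => c i * fvec τ ε σ i (Fin.last n) / p (Fin.last n) with hbdef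
    have hcnonneg : ∀ i, 0 ≤ c i := by
      intro i
      have hci := hc i
      unfold Rset at hci
      split_ifs at hci with hps
      · exact hci
      · exact le_of_lt hci
    have hbnonneg : ∀ i, 0 ≤ b i := fun i =>
      div_nonneg (mul_nonneg (hcnonneg i) (fvec_pos τ ε hpos σ i _).le) htpos.le
    have hbsum : ∑ i, b i = 1 := by
      rw [hbdef, ← Finset.sum_div, hplast, div_self htpos.ne']
    have hble : ∀ i, b i ≤ 1 := by
      intro i
      calc b i ≤ ∑ j, b j := Finset.single_le_sum (fun j _ => hbnonneg j) (Finset.mem_univ i)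
      _ = 1 := hbsum
    constructor
    · rw [simplex, if_pos hw]
      refine ⟨b, hbsum, ?_, ?_⟩
      · intro i
        have hci := hc i
        unfold Rset at hci
        unfold Jset
        split_ifs at hci ⊢ with hps
        · exact ⟨hbnonneg i, hble i⟩
        · exact ⟨div_pos (mul_pos hci (fvec_pos τ ε hpos σ i _)) htpos, hble i⟩
      · funext j
        have hnum : p (Fin.castSucc j) = ∑ i, c i * fvec τ ε σ i (Fin.castSucc j) := by
          conv_lhs => rw [hpsum]
          simp [Finset.sum_apply]
        show p (Fin.castSucc j) / p (Fin.last n) = _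
        rw [hnum, Finset.sum_div]
        simp only [Finset.sum_apply, Pi.smul_apply, smul_eq_mul]
        apply Finset.sum_congr rfl
        intro i _
        have hfl : fvec τ ε σ i (Fin.last n) ≠ 0 := (fvec_pos τ ε hpos σ i _).ne'
        simp only [hbdef, phi, ell]
        field_simp
    · refine ⟨u, hu, ?_⟩
      rw [hpu, ell_mul]
  · -- InjOn
    rintro p ⟨_, u, hu, hpu⟩ q ⟨_, v, hv, hqv⟩ hpq
    have hellx : ∀ j, ell x j ≠ 0 := fun j => (div_pos (hx _) (hx _)).ne'
    have h1 : ell (emb τ ((u : 𝓞 K) : K)) * ell x = ell (emb τ ((v : 𝓞 K) : K)) * ell x := by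
      rw [← ell_mul, ← ell_mul, ← hpu, ← hqv]; exact hpq
    have h2 : ell (emb τ ((u : 𝓞 K) : K)) = ell (emb τ ((v : 𝓞 K) : K)) := by
      funext j
      have h3 := congr_fun h1 j
      simp only [Pi.mul_apply] at h3
      exact mul_right_cancel₀ (hellx j) h3
    have huv := unit_eq_of_ell_emb_eq τ ε hτ hdeg hpos hu hv h2
    rw [hpu, hqv, huv]
  · -- SurjOn
    rintro z ⟨hzS, u, hu, hzu⟩
    rw [simplex, if_pos hw] at hzS
    obtain ⟨b, hbsum, hb, hz⟩ := hzS
    set p : Fin (n + 1) → ℝ := emb τ ((u : 𝓞 K) : K) * x with hpdef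
    have hppos : ∀ l, 0 < p l := fun l => mul_pos (mem_V_pos τ ε hpos hu l) (hx l)
    have htpos : 0 < p (Fin.last n) := hppos _
    set c : Fin (n + 1) → ℝ :=
      fun i => b i * p (Fin.last n) / fvec τ ε σ i (Fin.last n) with hcdef
    have hellp : ∀ j, ell p j = z j := by
      intro j
      rw [hzu]
      simp only [ell, Pi.mul_apply, emb, hpdef]
      exact mul_div_mul_comm _ _ _ _
    have hpsum : p = ∑ i, c i • fvec τ ε σ i := by
      funext l
      simp only [Finset.sum_apply, Pi.smul_apply, smul_eq_mul]
      induction l using Fin.lastCases with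
      | last =>
        have hterm : ∀ i, c i * fvec τ ε σ i (Fin.last n) = b i * p (Fin.last n) := by
          intro i
          have hfl : fvec τ ε σ i (Fin.last n) ≠ 0 := (fvec_pos τ ε hpos σ i _).ne'
          simp only [hcdef]
          field_simp
        rw [Finset.sum_congr rfl fun i _ => hterm i, ← Finset.sum_mul, hbsum, one_mul]
      | cast j =>
        have h1 : ∑ i, c i * fvec τ ε σ i (Fin.castSucc j) = p (Fin.last n) * z j := by
          rw [hz]
          simp only [Finset.sum_apply, Pi.smul_apply, smul_eq_mul, Finset.mul_sum]
          apply Finset.sum_congr rfl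
          intro i _
          have hfl : fvec τ ε σ i (Fin.last n) ≠ 0 := (fvec_pos τ ε hpos σ i _).ne'
          simp only [hcdef, phi, ell]
          field_simp
        rw [h1, ← hellp j]
        show p (Fin.castSucc j) = p (Fin.last n) * (p (Fin.castSucc j) / p (Fin.last n))
        field_simp
    refine ⟨p, ⟨?_, u, hu, hpdef⟩, ?_⟩
    · rw [Cone, if_pos hw]
      refine ⟨c, ?_, hpsum⟩
      intro i
      have hbi := hb i
      unfold Jset at hbi
      unfold Rset
      have hfl : 0 < fvec τ ε σ i (Fin.last n) := fvec_pos τ ε hpos σ i _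
      split_ifs at hbi ⊢ with hps
      · exact div_nonneg (mul_nonneg hbi.1 htpos.le) hfl.le
      · exact div_pos (mul_pos hbi.1 htpos) hfl
    · funext j
      exact hellp j

/-- **Proposition 9.** If the signed simplices `{(c_σ, w_σ)}` form a signed fundamental
domain for the action of `Ṽ` on `ℝ^n_+`, then the signed cones `{(C_σ, w_σ)}` form a
signed fundamental domain for the action of `V` on `ℝ^{n+1}_+`. -/
theorem signed_domain_of_cones_of_signed_domain_of_simplices
    {K : Type*} [Field K] [NumberField K] {n : ℕ} (hn : 1 ≤ n)
    (τ : Fin (n + 1) → (K →+* ℝ)) (hτ : Function.Injective τ)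
    (hdeg : Module.finrank ℚ K = n + 1)
    (ε : Fin n → (𝓞 K)ˣ) (hpos : ∀ i, ε i ∈ Eplus τ)
    (B : ℕ)
    (hbound : ∀ y ∈ posOrthant n, ∀ σ : Equiv.Perm (Fin n),
      (simplex τ ε σ ∩ torbit τ ε y).Finite ∧ (simplex τ ε σ ∩ torbit τ ε y).ncard ≤ B)
    (hsigned : ∀ y ∈ posOrthant n,
      ∑ σ : Equiv.Perm (Fin n), w τ ε σ * ((simplex τ ε σ ∩ torbit τ ε y).ncard : ℝ) = 1) :
    (∃ B' : ℕ, ∀ x ∈ posOrthant (n + 1), ∀ σ : Equiv.Perm (Fin n),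
      (Cone τ ε σ ∩ orbit τ ε x).Finite ∧ (Cone τ ε σ ∩ orbit τ ε x).ncard ≤ B') ∧
    ∀ x ∈ posOrthant (n + 1),
      ∑ σ : Equiv.Perm (Fin n), w τ ε σ * ((Cone τ ε σ ∩ orbit τ ε x).ncard : ℝ) = 1  := by
  have hbij : ∀ x ∈ posOrthant (n + 1), ∀ σ : Equiv.Perm (Fin n),
      Set.BijOn ell (Cone τ ε σ ∩ orbit τ ε x) (simplex τ ε σ ∩ torbit τ ε (ell x)) :=
    fun x hx σ => bijOn_ell τ ε hτ hdeg hpos σ hx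
  have hellx : ∀ x ∈ posOrthant (n + 1), ell x ∈ posOrthant n := by
    intro x hx j
    exact div_pos (hx _) (hx _)
  have hcard : ∀ x ∈ posOrthant (n + 1), ∀ σ : Equiv.Perm (Fin n),
      (Cone τ ε σ ∩ orbit τ ε x).Finite ∧
      (Cone τ ε σ ∩ orbit τ ε x).ncard = (simplex τ ε σ ∩ torbit τ ε (ell x)).ncard := by
    intro x hx σ
    have hb := hbij x hx σ
    have himg := hb.image_eq
    have hfin : (simplex τ ε σ ∩ torbit τ ε (ell x)).Finite := (hbound (ell x) (hellx x hx) σ).1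
    have hfin' : (Cone τ ε σ ∩ orbit τ ε x).Finite :=
      Set.Finite.of_finite_image (himg ▸ hfin) hb.injOn
    refine ⟨hfin', ?_⟩
    rw [← himg, Set.ncard_image_of_injOn hb.injOn]
  constructor
  · refine ⟨B, fun x hx σ => ⟨(hcard x hx σ).1, ?_⟩⟩
    rw [(hcard x hx σ).2]
    exact (hbound (ell x) (hellx x hx) σ).2
  · intro x hx
    rw [← hsigned (ell x) (hellx x hx)]
    apply Finset.sum_congr rfl
    intro σ _
    rw [(hcard x hx σ).2]


end SignedDomain
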